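/- Let g: ℤ×ℤ → ℤ satisfy the functional equation g(x,y)g(y,z) = g(x,w)g(w,z) for all x, y, z, w ∈ ℤ. If g is not semi-trivial, then there exist a constant c ∈ ℤ and a function h: ℤ → ℤ∖{0} such that g(x,y) = c·h(x)/h(y) for all x, y (in particular h(y) divides c·h(x) for all x, y). -/
import Mathlib


/-- `g : ℤ×ℤ → ℤ` is semi-trivial if there are sets `A, B ⊆ ℤ` with `A ∪ B = ℤ`
such that `g(x,y) = 0` whenever `x ∈ A` or `y ∈ B`. -/
def SemiTrivial (g : ℤ → ℤ → ℤ) : Prop :=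
  ∃ A B : Set ℤ, A ∪ B = Set.univ ∧
    (∀ x y : ℤ, x ∈ A → g x y = 0) ∧ (∀ x y : ℤ, y ∈ B → g x y = 0)

/-- if `g` satisfies `g(x,y)g(y,z) = g(x,w)g(w,z)` for all `x,y,z,w` and
is not semi-trivial, then there are a constant `c` and a nowhere-zero `h : ℤ → ℤ` with
`g(x,y) = c·h(x)/h(y)` for all `x, y` (in particular `h(y) ∣ c·h(x)`). -/
theorem stmt4 (g : ℤ → ℤ → ℤ)
    (hg : ∀ x y z w : ℤ, g x y * g y z = g x w * g w z)
    (hns : ¬ SemiTrivial g) :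
    ∃ (c : ℤ) (h : ℤ → ℤ), (∀ y, h y ≠ 0) ∧
      ∀ x y : ℤ, h y ∣ c * h x ∧ g x y = c * h x / h y := by
  have key : ∃ t, (∃ a, g t a ≠ 0) ∧ (∃ b, g b t ≠ 0) := by
    by_contra hcon
    push_neg at hcon
    apply hns
    refine ⟨{x | ∀ y, g x y = 0}, {y | ∀ x, g x y = 0}, ?_,
      fun x y hx => hx y, fun x y hy => hy x⟩
    ext t
    simp only [Set.mem_union, Set.mem_setOf_eq, Set.mem_univ, iff_true]
    by_cases hA : ∃ a, g t a ≠ 0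
    · exact Or.inr (hcon t hA)
    · push_neg at hA
      exact Or.inl hA
  obtain ⟨t, ⟨a, hta⟩, ⟨b, hbt⟩⟩ := key
  have hne : ∀ w, g b w * g w a ≠ 0 := fun w => by
    rw [← hg b t a w]; exact mul_ne_zero hbt hta
  have hwa : ∀ w, g w a ≠ 0 := fun w => (mul_ne_zero_iff.mp (hne w)).2
  refine ⟨g a a, fun y => g y a, hwa, fun x y => ?_⟩
  have h1 : g a a * g x a = g x y * g y a := by rw [hg x y a a]; ring
  refine ⟨⟨g x y, by rw [h1]; ring⟩, ?_⟩
  rw [h1, Int.mul_ediv_cancel _ (hwa y)]
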